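/- (Uniqueness for the stationary MFG) Suppose H is strictly convex and C², g is strictly increasing, and φ > 0 on 𝕋^d. Then the stationary MFG system -u - H(Du) + g(m) - V = 0, m - div(m D_pH(Du)) - φ = 0 on 𝕋^d has at most one solution (m, u) ∈ C²(𝕋^d; ℝ₀⁺) × C¹(𝕋^d). -/

import Mathlib

noncomputable section
open MeasureTheory

/-- Euclidean space `ℝ^d`, the covering space of the torus `𝕋^d`. -/
abbrev Ed (d : ℕ) := Fin d → ℝ

/-- A fundamental domain (unit cube) for the torus `𝕋^d = ℝ^d / ℤ^d`. -/
def cube (d : ℕ) : Set (Ed d) := Set.univ.pi fun _ => Set.Icc (0:ℝ) 1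

/-- `ℤ^d`-periodicity: a function on `ℝ^d` represents a function on the torus `𝕋^d`. -/
def Per {d : ℕ} (u : Ed d → ℝ) : Prop :=
  ∀ (x : Ed d) (m : Fin d → ℤ), u (x + fun i => (m i : ℝ)) = u x

/-- `i`-th partial derivative. -/
def pd {d : ℕ} (i : Fin d) (u : Ed d → ℝ) (x : Ed d) : ℝ :=
  fderiv ℝ u x (Pi.single i 1)

/-- The gradient `Du`. -/
def grad {d : ℕ} (u : Ed d → ℝ) (x : Ed d) : Ed d := fun i => pd i u x

/-- The `i`-th component of the flux `m D_pH(Du)`. -/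
def flux {d : ℕ} (H : Ed d → ℝ) (m u : Ed d → ℝ) (i : Fin d) (y : Ed d) : ℝ :=
  m y * pd i H (grad u y)

/-- The divergence `div(m D_pH(Du))`. -/
def divFlux {d : ℕ} (H : Ed d → ℝ) (m u : Ed d → ℝ) (x : Ed d) : ℝ :=
  ∑ i, pd i (flux H m u i) x

/-- First component of the MFG operator: `-u - H(Du) + g(m) - V`. -/
def F1 {d : ℕ} (H : Ed d → ℝ) (g : ℝ → ℝ) (V : Ed d → ℝ) (m u : Ed d → ℝ) (x : Ed d) : ℝ :=
  -(u x) - H (grad u x) + g (m x) - V x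

/-- Second component of the MFG operator: `m - div(m D_pH(Du)) - φ`. -/
def F2 {d : ℕ} (H : Ed d → ℝ) (φ : Ed d → ℝ) (m u : Ed d → ℝ) (x : Ed d) : ℝ :=
  m x - divFlux H m u x - φ x

/-! ### Auxiliary lemmas -/

section Aux
open Filter Topology
variable {d : ℕ}

lemma cube_eq_Icc : cube d = Set.Icc (0 : Ed d) 1 := by
  rw [cube, ← Set.pi_univ_Icc]; rfl

lemma continuous_pd {f : Ed d → ℝ} (hf : ContDiff ℝ 1 f) (i : Fin d) :
    Continuous (pd i f) :=
  (hf.continuous_fderiv one_ne_zero).clm_apply continuous_const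

lemma continuous_grad {f : Ed d → ℝ} (hf : ContDiff ℝ 1 f) : Continuous (grad f) :=
  continuous_pi fun i => continuous_pd hf i

/-- A continuous linear functional on `ℝ^d` is determined by its coordinate actions. -/
lemma clm_apply_eq_sum (L : Ed d →L[ℝ] ℝ) (v : Ed d) :
    L v = ∑ i, v i * L (Pi.single i 1) := by
  have hv : v = ∑ i, (v i) • (Pi.single i 1 : Ed d) := by
    funext j
    rw [Finset.sum_apply]
    simp [Pi.single_apply]
  conv_lhs => rw [hv]
  rw [map_sum]
  simp [smul_eq_mul]

lemma per_fderiv {f : Ed d → ℝ} (hf : Differentiable ℝ f) (hper : Per f)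
    (x : Ed d) (m : Fin d → ℤ) :
    fderiv ℝ f (x + fun i => (m i : ℝ)) = fderiv ℝ f x := by
  set c : Ed d := fun i => (m i : ℝ)
  have hfun : (fun y : Ed d => f (y + c)) = f := funext fun y => hper y m
  have h1 : HasFDerivAt (fun y : Ed d => f (y + c)) (fderiv ℝ f (x + c)) x := by
    have := (hf (x + c)).hasFDerivAt.comp x ((hasFDerivAt_id x).add_const c)
    simpa [Function.comp_def] using this
  rw [hfun] at h1
  exact (h1.fderiv).symm

lemma per_grad {f : Ed d → ℝ} (hf : Differentiable ℝ f) (hper : Per f)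
    (x : Ed d) (m : Fin d → ℤ) : grad f (x + fun i => (m i : ℝ)) = grad f x := by
  funext i
  unfold grad pd
  rw [per_fderiv hf hper x m]

/-- Gradient inequality for differentiable convex functions. -/
lemma convex_grad_ineq {H : Ed d → ℝ} (hH : Differentiable ℝ H)
    (hconv : ConvexOn ℝ Set.univ H) (p q : Ed d) :
    H p + fderiv ℝ H p (q - p) ≤ H q := by
  set v := q - p with hv
  have hd : HasFDerivAt H (fderiv ℝ H p) p := (hH p).hasFDerivAt
  have hline : HasDerivAt (fun t : ℝ => H (p + t • v)) (fderiv ℝ H p v) 0 := by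
    have h1 : HasDerivAt (fun t : ℝ => p + t • v) v 0 := by
      simpa using ((hasDerivAt_id (0:ℝ)).smul_const v).const_add p
    have h2 : HasFDerivAt H (fderiv ℝ H p) (p + (0:ℝ) • v) := by simpa using hd
    simpa [Function.comp_def] using (h2.comp_hasDerivAt 0 h1)
  have hslope : ∀ t : ℝ, t ∈ Set.Ioc (0:ℝ) 1 →
      slope (fun t : ℝ => H (p + t • v)) 0 t ≤ H q - H p := by
    intro t ht
    have hcomb : p + t • v = (1 - t) • p + t • q := by
      rw [hv, smul_sub, sub_smul, one_smul]; abel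
    have hle := hconv.2 (Set.mem_univ p) (Set.mem_univ q)
      (by linarith [ht.2] : (0:ℝ) ≤ 1 - t) (le_of_lt ht.1) (by ring)
    rw [← hcomb] at hle
    simp only [smul_eq_mul] at hle
    have h3 : H (p + t • v) - H p ≤ t * (H q - H p) := by nlinarith [hle]
    rw [slope_def_field]
    simp only [zero_smul, sub_zero, add_zero]
    rw [div_le_iff₀ ht.1]
    simpa [mul_comm] using h3
  have htend : Tendsto (slope (fun t : ℝ => H (p + t • v)) 0) (𝓝[>] (0:ℝ))
      (𝓝 (fderiv ℝ H p v)) :=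
    (hasDerivAt_iff_tendsto_slope.1 hline).mono_left
      (nhdsWithin_mono _ fun t ht => ne_of_gt ht)
  have hle : fderiv ℝ H p v ≤ H q - H p := by
    refine le_of_tendsto htend ?_
    filter_upwards [Ioc_mem_nhdsGT_of_mem (by norm_num : (0:ℝ) ∈ Set.Ico (0:ℝ) 1)] with t ht
    exact hslope t ht
  linarith

/-- Equality in the gradient inequality forces equality of the points,
for strictly convex functions. -/
lemma strict_convex_grad_eq {H : Ed d → ℝ} (hH : Differentiable ℝ H)
    (hconv : StrictConvexOn ℝ Set.univ H) {p q : Ed d}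
    (heq : H q = H p + fderiv ℝ H p (q - p)) : p = q := by
  by_contra hne
  set s : Ed d := (2⁻¹ : ℝ) • p + (2⁻¹ : ℝ) • q with hs
  have hstrict : H s < (2⁻¹ : ℝ) * H p + (2⁻¹ : ℝ) * H q := by
    have := hconv.2 (Set.mem_univ p) (Set.mem_univ q) hne
      (by norm_num : (0:ℝ) < 2⁻¹) (by norm_num : (0:ℝ) < 2⁻¹) (by norm_num)
    simpa [smul_eq_mul] using this
  have hlower := convex_grad_ineq hH hconv.convexOn p s
  have hsp : s - p = (2⁻¹ : ℝ) • (q - p) := by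
    rw [hs, smul_sub]
    funext j; simp; ring
  rw [hsp, ContinuousLinearMap.map_smul] at hlower
  have : fderiv ℝ H p (q - p) = H q - H p := by linarith
  rw [this] at hlower
  simp only [smul_eq_mul] at hlower
  linarith

lemma insertNth_one_eq {n : ℕ} (i : Fin (n+1)) (y : Fin n → ℝ) :
    i.insertNth (1:ℝ) y =
      i.insertNth (0:ℝ) y + fun j => (((Pi.single i 1 : Fin (n+1) → ℤ) j : ℝ)) := by
  funext j
  rcases eq_or_ne j i with rfl | hj
  · simp
  · obtain ⟨k, rfl⟩ := Fin.exists_succAbove_eq hj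
    simp [Fin.insertNth_apply_succAbove, Pi.single_apply, (Fin.succAbove_ne i k)]

/-- The integral over the unit cube of the divergence of a `C¹` periodic vector field
vanishes: this is the statement that `𝕋^d` has no boundary. -/
lemma integral_divergence_zero (X : Fin d → Ed d → ℝ)
    (hX : ∀ i, ContDiff ℝ 1 (X i)) (hXper : ∀ i, Per (X i)) :
    ∫ x in cube d, (∑ i, pd i (X i) x) = 0 := by
  cases d with
  | zero => simp
  | succ n =>
    have hle : (0 : Ed (n+1)) ≤ 1 := fun i => by norm_num
    have hcont : Continuous fun x => ∑ i, fderiv ℝ (X i) x (Pi.single i 1) :=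
      continuous_finset_sum _ fun i _ => continuous_pd (hX i) i
    have hInt : IntegrableOn (fun x => ∑ i, fderiv ℝ (X i) x (Pi.single i 1))
        (Set.Icc (0 : Ed (n+1)) 1) :=
      hcont.continuousOn.integrableOn_compact isCompact_Icc
    have key := integral_divergence_of_hasFDerivAt_off_countable'
      (0 : Ed (n+1)) 1 hle X (fun i x => fderiv ℝ (X i) x) ∅ Set.countable_empty
      (fun i => (hX i).continuous.continuousOn)
      (fun x _ i => ((hX i).differentiable one_ne_zero x).hasFDerivAt)
      hInt
    have hfaces : ∀ i : Fin (n+1),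
        ((∫ x in Set.Icc ((0:Ed (n+1)) ∘ i.succAbove) ((1:Ed (n+1)) ∘ i.succAbove),
            X i (i.insertNth ((1:Ed (n+1)) i) x)) -
          ∫ x in Set.Icc ((0:Ed (n+1)) ∘ i.succAbove) ((1:Ed (n+1)) ∘ i.succAbove),
            X i (i.insertNth ((0:Ed (n+1)) i) x)) = 0 := by
      intro i
      have heq : ∀ y : Fin n → ℝ, X i (i.insertNth ((1:Ed (n+1)) i) y)
          = X i (i.insertNth ((0:Ed (n+1)) i) y) := by
        intro y
        have h1 : ((1:Ed (n+1)) i) = (1:ℝ) := rfl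
        have h0 : ((0:Ed (n+1)) i) = (0:ℝ) := rfl
        rw [h1, h0, insertNth_one_eq i y]
        exact hXper i (i.insertNth (0:ℝ) y) (Pi.single i 1)
      simp only [heq, sub_self]
    rw [cube_eq_Icc]
    calc ∫ x in Set.Icc (0:Ed (n+1)) 1, ∑ i, pd i (X i) x
        = ∫ x in Set.Icc (0:Ed (n+1)) 1, ∑ i, fderiv ℝ (X i) x (Pi.single i 1) := rfl
      _ = _ := key
      _ = 0 := by rw [Finset.sum_eq_zero fun i _ => hfaces i]

/-- A continuous nonnegative function with vanishing integral over the cube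
vanishes on the cube. -/
lemma eq_zero_on_cube_of_integral_zero {f : Ed d → ℝ} (hf : Continuous f)
    (hnn : ∀ x, 0 ≤ f x) (hint : ∫ x in cube d, f x = 0) :
    ∀ x ∈ cube d, f x = 0 := by
  by_contra hcon
  push_neg at hcon
  obtain ⟨x₀, hx₀c, hx₀⟩ := hcon
  have hx₀pos : 0 < f x₀ := lt_of_le_of_ne (hnn x₀) (Ne.symm hx₀)
  set U : Set (Ed d) := f ⁻¹' Set.Ioi 0 with hU
  have hUopen : IsOpen U := isOpen_Ioi.preimage hf
  have hx₀U : x₀ ∈ U := hx₀pos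
  set box : Set (Ed d) := Set.univ.pi fun _ => Set.Ioo (0:ℝ) 1 with hbox
  have hboxopen : IsOpen box := isOpen_set_pi Set.finite_univ fun i _ => isOpen_Ioo
  have hboxsub : box ⊆ cube d := fun y hy i hi => Set.Ioo_subset_Icc_self (hy i hi)
  have hxcl : x₀ ∈ closure box := by
    rw [hbox, closure_pi_set]
    intro i hi
    simpa [closure_Ioo (one_ne_zero).symm] using hx₀c i hi
  have hne : (U ∩ box).Nonempty := by
    rcases mem_closure_iff.1 hxcl U hUopen hx₀U with ⟨y, hy⟩
    exact ⟨y, hy⟩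
  have hpos : 0 < volume (U ∩ box) := (hUopen.inter hboxopen).measure_pos volume hne
  have hsub : U ∩ box ⊆ Function.support f ∩ cube d := by
    rintro y ⟨hyU, hyb⟩
    exact ⟨ne_of_gt hyU, hboxsub hyb⟩
  have hintOn : IntegrableOn f (cube d) := by
    rw [cube_eq_Icc]
    exact hf.continuousOn.integrableOn_compact isCompact_Icc
  have := (setIntegral_pos_iff_support_of_nonneg_ae
    (Filter.Eventually.of_forall fun x => hnn x : 0 ≤ᵐ[volume.restrict (cube d)] f)
    hintOn).2 (lt_of_lt_of_le hpos (measure_mono hsub))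
  rw [hint] at this
  exact lt_irrefl 0 this

/-- Any solution of the Fokker–Planck part of the system is strictly positive. -/
lemma m_pos {H φ m u : Ed d → ℝ}
    (hH : ContDiff ℝ 2 H) (hm : ContDiff ℝ 2 m) (hmnn : ∀ x, 0 ≤ m x)
    (hu : ContDiff ℝ 1 u) (hflux : ∀ i, ContDiff ℝ 1 (flux H m u i))
    (hφpos : ∀ x, 0 < φ x) (heq2 : ∀ x, F2 H φ m u x = 0) :
    ∀ x, 0 < m x := by
  intro x₀
  rcases (hmnn x₀).lt_or_eq with h | h0
  · exact h
  have h0 : m x₀ = 0 := h0.symm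
  exfalso
  have hmin : IsLocalMin m x₀ :=
    Filter.Eventually.of_forall fun y => by rw [h0]; exact hmnn y
  have hfd : fderiv ℝ m x₀ = 0 := hmin.fderiv_eq_zero
  have hpd0 : ∀ i : Fin d, pd i (flux H m u i) x₀ = 0 := by
    intro i
    set e : Ed d := Pi.single i 1 with he
    set L : ℝ → Ed d := fun t => x₀ + t • e with hLdef
    have hL0 : L 0 = x₀ := by simp [hLdef]
    have hL : ∀ t : ℝ, HasDerivAt L e t := fun t => by
      simpa [hLdef] using ((hasDerivAt_id t).smul_const e).const_add x₀
    have hLcont : Continuous L := continuous_const.add (continuous_id.smul continuous_const)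
    have hFL : HasDerivAt (fun t => flux H m u i (L t)) (pd i (flux H m u i) x₀) 0 := by
      have hf : HasFDerivAt (flux H m u i) (fderiv ℝ (flux H m u i) x₀) (L 0) := by
        rw [hL0]; exact (((hflux i).differentiable one_ne_zero) x₀).hasFDerivAt
      exact hf.comp_hasDerivAt 0 (hL 0)
    have hmL : HasDerivAt (fun t => m (L t)) 0 0 := by
      have hf : HasFDerivAt m (0 : Ed d →L[ℝ] ℝ) (L 0) := by
        rw [hL0, ← hfd]
        exact ((hm.differentiable two_ne_zero) x₀).hasFDerivAt
      simpa [Function.comp_def] using hf.comp_hasDerivAt 0 (hL 0)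
    have htend1 : Tendsto (slope (fun t => m (L t)) 0) (𝓝[≠] (0:ℝ)) (𝓝 0) :=
      hasDerivAt_iff_tendsto_slope.1 hmL
    have hVcont : Continuous fun t => pd i H (grad u (L t)) :=
      (continuous_pd (hH.of_le one_le_two) i).comp ((continuous_grad hu).comp hLcont)
    have htendV : Tendsto (fun t => pd i H (grad u (L t))) (𝓝[≠] (0:ℝ))
        (𝓝 (pd i H (grad u x₀))) := by
      have := (hVcont.tendsto 0).mono_left (nhdsWithin_le_nhds (s := {(0:ℝ)}ᶜ))
      rwa [hL0] at this
    have hslope_eq : slope (fun t => flux H m u i (L t)) 0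
        = fun t => slope (fun t => m (L t)) 0 t * pd i H (grad u (L t)) := by
      funext t
      simp only [slope_def_field, flux, hL0, h0, zero_mul, sub_zero]
      rw [div_mul_eq_mul_div]
    have htend2 : Tendsto (slope (fun t => flux H m u i (L t)) 0) (𝓝[≠] (0:ℝ)) (𝓝 0) := by
      rw [hslope_eq]
      simpa using htend1.mul htendV
    have htend3 : Tendsto (slope (fun t => flux H m u i (L t)) 0) (𝓝[≠] (0:ℝ))
        (𝓝 (pd i (flux H m u i) x₀)) := hasDerivAt_iff_tendsto_slope.1 hFL
    exact tendsto_nhds_unique htend3 htend2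
  have h2 := heq2 x₀
  rw [F2, divFlux, Finset.sum_eq_zero (fun i _ => hpd0 i), h0] at h2
  have := hφpos x₀
  linarith

end Aux

/-- Uniqueness for the stationary MFG: if `H` is strictly convex and `C²`, `g` is
strictly increasing, and `φ > 0` on `𝕋^d`, then the system
`-u - H(Du) + g(m) - V = 0`, `m - div(m D_pH(Du)) - φ = 0` has at most one solution
`(m,u) ∈ C²(𝕋^d;ℝ₀⁺) × C¹(𝕋^d)`. -/
theorem stationary_MFG_uniqueness {d : ℕ}
    (H : Ed d → ℝ) (g : ℝ → ℝ) (V φ : Ed d → ℝ)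
    (hH : ContDiff ℝ 2 H) (hHconv : StrictConvexOn ℝ Set.univ H)
    (hgc : ContinuousOn g (Set.Ici 0)) (hgmono : StrictMonoOn g (Set.Ici 0))
    (hV : Continuous V) (hVper : Per V)
    (hφ : Continuous φ) (hφper : Per φ) (hφpos : ∀ x, 0 < φ x)
    (m₁ u₁ m₂ u₂ : Ed d → ℝ)
    (hm₁ : ContDiff ℝ 2 m₁) (hm₁per : Per m₁) (hm₁nn : ∀ x, 0 ≤ m₁ x)
    (hu₁ : ContDiff ℝ 1 u₁) (hu₁per : Per u₁)
    (hflux₁ : ∀ i, ContDiff ℝ 1 (flux H m₁ u₁ i))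
    (heq1₁ : ∀ x, F1 H g V m₁ u₁ x = 0)
    (heq2₁ : ∀ x, F2 H φ m₁ u₁ x = 0)
    (hm₂ : ContDiff ℝ 2 m₂) (hm₂per : Per m₂) (hm₂nn : ∀ x, 0 ≤ m₂ x)
    (hu₂ : ContDiff ℝ 1 u₂) (hu₂per : Per u₂)
    (hflux₂ : ∀ i, ContDiff ℝ 1 (flux H m₂ u₂ i))
    (heq1₂ : ∀ x, F1 H g V m₂ u₂ x = 0)
    (heq2₂ : ∀ x, F2 H φ m₂ u₂ x = 0) :
    m₁ = m₂ ∧ u₁ = u₂ := by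
  have hHd : Differentiable ℝ H := hH.differentiable two_ne_zero
  have hu₁d : Differentiable ℝ u₁ := hu₁.differentiable one_ne_zero
  have hu₂d : Differentiable ℝ u₂ := hu₂.differentiable one_ne_zero
  -- the difference of the value functions and the test vector field
  set w : Ed d → ℝ := fun x => u₁ x - u₂ x with hwdef
  set Y : Fin d → Ed d → ℝ :=
    fun i x => w x * (flux H m₁ u₁ i x - flux H m₂ u₂ i x) with hYdef
  have hwC1 : ContDiff ℝ 1 w := hu₁.sub hu₂
  have hYC1 : ∀ i, ContDiff ℝ 1 (Y i) := fun i => hwC1.mul ((hflux₁ i).sub (hflux₂ i))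
  have hfluxper : ∀ (mf uf : Ed d → ℝ), Per mf → Per uf → Differentiable ℝ uf →
      ∀ i, Per (flux H mf uf i) := by
    intro mf uf hmf huf hufd i x mm
    unfold flux
    rw [hmf x mm, per_grad hufd huf x mm]
  have hwper : Per w := fun x mm => by
    simp only [hwdef, hu₁per x mm, hu₂per x mm]
  have hYper : ∀ i, Per (Y i) := by
    intro i x mm
    simp only [hYdef, hwper x mm, hfluxper m₁ u₁ hm₁per hu₁per hu₁d i x mm,
      hfluxper m₂ u₂ hm₂per hu₂per hu₂d i x mm]
  -- the three nonnegative quantities in the monotonicity identity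
  set A₁ : Ed d → ℝ := fun x => m₁ x *
    (H (grad u₂ x) - H (grad u₁ x) - fderiv ℝ H (grad u₁ x) (grad u₂ x - grad u₁ x))
    with hA₁def
  set A₂ : Ed d → ℝ := fun x => m₂ x *
    (H (grad u₁ x) - H (grad u₂ x) - fderiv ℝ H (grad u₂ x) (grad u₁ x - grad u₂ x))
    with hA₂def
  set B : Ed d → ℝ := fun x => (m₁ x - m₂ x) * (g (m₁ x) - g (m₂ x)) with hBdef
  -- the pointwise monotonicity identity
  have hkey : ∀ x, A₁ x + A₂ x + B x = ∑ i, pd i (Y i) x := by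
    intro x
    -- derivative of the product Y i
    have hpdY : ∀ i, pd i (Y i) x =
        (grad u₁ x i - grad u₂ x i) * (flux H m₁ u₁ i x - flux H m₂ u₂ i x)
        + w x * (pd i (flux H m₁ u₁ i) x - pd i (flux H m₂ u₂ i) x) := by
      intro i
      have hw' : HasFDerivAt w (fderiv ℝ u₁ x - fderiv ℝ u₂ x) x :=
        (hu₁d x).hasFDerivAt.sub (hu₂d x).hasFDerivAt
      have hfl' : HasFDerivAt (fun y => flux H m₁ u₁ i y - flux H m₂ u₂ i y)
          (fderiv ℝ (flux H m₁ u₁ i) x - fderiv ℝ (flux H m₂ u₂ i) x) x :=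
        (((hflux₁ i).differentiable one_ne_zero x).hasFDerivAt).sub
          (((hflux₂ i).differentiable one_ne_zero x).hasFDerivAt)
      have hprod := hw'.mul hfl'
      have : pd i (Y i) x = (w x • (fderiv ℝ (flux H m₁ u₁ i) x - fderiv ℝ (flux H m₂ u₂ i) x)
          + (flux H m₁ u₁ i x - flux H m₂ u₂ i x) • (fderiv ℝ u₁ x - fderiv ℝ u₂ x))
          (Pi.single i 1) := by
        unfold pd
        rw [show Y i = (w * fun y => flux H m₁ u₁ i y - flux H m₂ u₂ i y) from rfl, hprod.fderiv]
      rw [this]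
      simp only [ContinuousLinearMap.add_apply, ContinuousLinearMap.smul_apply,
        ContinuousLinearMap.sub_apply, smul_eq_mul]
      have hg1 : fderiv ℝ u₁ x (Pi.single i 1) = grad u₁ x i := rfl
      have hg2 : fderiv ℝ u₂ x (Pi.single i 1) = grad u₂ x i := rfl
      rw [hg1, hg2]
      unfold pd
      ring
    -- the two PDEs at x
    have hdiv1 : divFlux H m₁ u₁ x = m₁ x - φ x := by
      have := heq2₁ x; rw [F2] at this; linarith
    have hdiv2 : divFlux H m₂ u₂ x = m₂ x - φ x := by
      have := heq2₂ x; rw [F2] at this; linarith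
    have hwval : w x = (g (m₁ x) - g (m₂ x)) - (H (grad u₁ x) - H (grad u₂ x)) := by
      have h1 := heq1₁ x; have h2 := heq1₂ x
      rw [F1] at h1 h2
      simp only [hwdef]
      linarith
    -- sum up
    have hsum : ∑ i, pd i (Y i) x =
        (∑ i, (grad u₁ x i - grad u₂ x i) * (flux H m₁ u₁ i x - flux H m₂ u₂ i x))
        + w x * (m₁ x - m₂ x) := by
      rw [Finset.sum_congr rfl fun i _ => hpdY i, Finset.sum_add_distrib, ← Finset.mul_sum,
        Finset.sum_sub_distrib]
      have : (∑ i, pd i (flux H m₁ u₁ i) x) - (∑ i, pd i (flux H m₂ u₂ i) x)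
          = m₁ x - m₂ x := by
        have e1 : divFlux H m₁ u₁ x = ∑ i, pd i (flux H m₁ u₁ i) x := rfl
        have e2 : divFlux H m₂ u₂ x = ∑ i, pd i (flux H m₂ u₂ i) x := rfl
        rw [← e1, ← e2, hdiv1, hdiv2]; ring
      rw [this]
    rw [hsum, hwval]
    -- now pure algebra with the sums
    have hfd1 : fderiv ℝ H (grad u₁ x) (grad u₂ x - grad u₁ x)
        = ∑ i, (grad u₂ x i - grad u₁ x i) * pd i H (grad u₁ x) := by
      rw [clm_apply_eq_sum]
      exact Finset.sum_congr rfl fun i _ => by rw [Pi.sub_apply]; rfl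
    have hfd2 : fderiv ℝ H (grad u₂ x) (grad u₁ x - grad u₂ x)
        = ∑ i, (grad u₁ x i - grad u₂ x i) * pd i H (grad u₂ x) := by
      rw [clm_apply_eq_sum]
      exact Finset.sum_congr rfl fun i _ => by rw [Pi.sub_apply]; rfl
    have hfluxv : ∀ i, flux H m₁ u₁ i x = m₁ x * pd i H (grad u₁ x) := fun i => rfl
    have hfluxv2 : ∀ i, flux H m₂ u₂ i x = m₂ x * pd i H (grad u₂ x) := fun i => rfl
    simp only [hA₁def, hA₂def, hBdef, hfd1, hfd2]
    have hsplit : ∑ i, (grad u₁ x i - grad u₂ x i) *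
        (flux H m₁ u₁ i x - flux H m₂ u₂ i x)
        = m₁ x * (∑ i, (grad u₁ x i - grad u₂ x i) * pd i H (grad u₁ x))
          - m₂ x * (∑ i, (grad u₁ x i - grad u₂ x i) * pd i H (grad u₂ x)) := by
      rw [Finset.mul_sum, Finset.mul_sum, ← Finset.sum_sub_distrib]
      refine Finset.sum_congr rfl fun i _ => ?_
      rw [hfluxv i, hfluxv2 i]; ring
    rw [hsplit]
    have hneg : ∑ i, (grad u₂ x i - grad u₁ x i) * pd i H (grad u₁ x)
        = -∑ i, (grad u₁ x i - grad u₂ x i) * pd i H (grad u₁ x) := by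
      rw [← Finset.sum_neg_distrib]
      exact Finset.sum_congr rfl fun i _ => by ring
    rw [hneg]
    ring
  -- integrate the identity over the cube
  have hdivint : ∫ x in cube d, (∑ i, pd i (Y i) x) = 0 :=
    integral_divergence_zero Y hYC1 hYper
  -- continuity of the three pieces
  have hgradcont₁ : Continuous (grad u₁) := continuous_grad hu₁
  have hgradcont₂ : Continuous (grad u₂) := continuous_grad hu₂
  have hfC : Continuous (fderiv ℝ H) := hH.continuous_fderiv two_ne_zero
  have hA₁c : Continuous A₁ := by
    apply hm₁.continuous.mul
    exact ((hH.continuous.comp hgradcont₂).sub (hH.continuous.comp hgradcont₁)).sub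
      ((hfC.comp hgradcont₁).clm_apply (hgradcont₂.sub hgradcont₁))
  have hA₂c : Continuous A₂ := by
    apply hm₂.continuous.mul
    exact ((hH.continuous.comp hgradcont₁).sub (hH.continuous.comp hgradcont₂)).sub
      ((hfC.comp hgradcont₂).clm_apply (hgradcont₁.sub hgradcont₂))
  have hgm₁ : Continuous fun x => g (m₁ x) :=
    hgc.comp_continuous hm₁.continuous hm₁nn
  have hgm₂ : Continuous fun x => g (m₂ x) :=
    hgc.comp_continuous hm₂.continuous hm₂nn
  have hBc : Continuous B :=
    (hm₁.continuous.sub hm₂.continuous).mul (hgm₁.sub hgm₂)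
  -- nonnegativity
  have hA₁nn : ∀ x, 0 ≤ A₁ x := by
    intro x
    apply mul_nonneg (hm₁nn x)
    have := convex_grad_ineq hHd hHconv.convexOn (grad u₁ x) (grad u₂ x)
    linarith
  have hA₂nn : ∀ x, 0 ≤ A₂ x := by
    intro x
    apply mul_nonneg (hm₂nn x)
    have := convex_grad_ineq hHd hHconv.convexOn (grad u₂ x) (grad u₁ x)
    linarith
  have hBnn : ∀ x, 0 ≤ B x := by
    intro x
    rcases lt_trichotomy (m₁ x) (m₂ x) with h | h | h
    · have hg := hgmono (hm₁nn x) (hm₂nn x) h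
      simp only [hBdef]
      nlinarith
    · simp [hBdef, h]
    · have hg := hgmono (hm₂nn x) (hm₁nn x) h
      simp only [hBdef]
      nlinarith
  -- integrability
  have hintOn : ∀ {f : Ed d → ℝ}, Continuous f → IntegrableOn f (cube d) := by
    intro f hf
    rw [cube_eq_Icc]
    exact hf.continuousOn.integrableOn_compact isCompact_Icc
  have hABsum : ∫ x in cube d, (A₁ x + A₂ x + B x) = 0 := by
    have : (fun x => A₁ x + A₂ x + B x) = fun x => ∑ i, pd i (Y i) x :=
      funext fun x => hkey x
    rw [this]
    exact hdivint
  have hintA₁ := hintOn hA₁c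
  have hintA₂ := hintOn hA₂c
  have hintB := hintOn hBc
  have hsplit1 : ∫ x in cube d, (A₁ x + A₂ x + B x)
      = (∫ x in cube d, (A₁ x + A₂ x)) + ∫ x in cube d, B x :=
    integral_add (f := fun x => A₁ x + A₂ x) (hintA₁.add hintA₂) hintB
  have hsplit2 : ∫ x in cube d, (A₁ x + A₂ x)
      = (∫ x in cube d, A₁ x) + ∫ x in cube d, A₂ x := integral_add hintA₁ hintA₂
  have hsplitint : ∫ x in cube d, (A₁ x + A₂ x + B x)
      = (∫ x in cube d, A₁ x) + (∫ x in cube d, A₂ x) + ∫ x in cube d, B x := by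
    rw [hsplit1, hsplit2]
  have hcubemeas : MeasurableSet (cube d) := by
    rw [cube_eq_Icc]; exact measurableSet_Icc
  have hIA₁ : 0 ≤ ∫ x in cube d, A₁ x :=
    setIntegral_nonneg hcubemeas fun x _ => hA₁nn x
  have hIA₂ : 0 ≤ ∫ x in cube d, A₂ x :=
    setIntegral_nonneg hcubemeas fun x _ => hA₂nn x
  have hIB : 0 ≤ ∫ x in cube d, B x :=
    setIntegral_nonneg hcubemeas fun x _ => hBnn x
  rw [hsplitint] at hABsum
  have hIA₁0 : ∫ x in cube d, A₁ x = 0 := by linarith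
  have hIB0 : ∫ x in cube d, B x = 0 := by linarith
  -- pointwise vanishing on the cube
  have hA₁0 := eq_zero_on_cube_of_integral_zero hA₁c hA₁nn hIA₁0
  have hB0 := eq_zero_on_cube_of_integral_zero hBc hBnn hIB0
  -- positivity of m₁
  have hm₁pos : ∀ x, 0 < m₁ x := m_pos hH hm₁ hm₁nn hu₁ hflux₁ hφpos heq2₁
  -- conclusions on the cube
  have hmeq : ∀ x ∈ cube d, m₁ x = m₂ x := by
    intro x hx
    by_contra hne
    rcases lt_or_gt_of_ne hne with h | h
    · have hg := hgmono (hm₁nn x) (hm₂nn x) h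
      have hB := hB0 x hx
      simp only [hBdef] at hB
      nlinarith
    · have hg := hgmono (hm₂nn x) (hm₁nn x) h
      have hB := hB0 x hx
      simp only [hBdef] at hB
      nlinarith
  have hDueq : ∀ x ∈ cube d, grad u₁ x = grad u₂ x := by
    intro x hx
    have hA := hA₁0 x hx
    simp only [hA₁def] at hA
    have hbr : H (grad u₂ x) - H (grad u₁ x)
        - fderiv ℝ H (grad u₁ x) (grad u₂ x - grad u₁ x) = 0 :=
      (mul_eq_zero.1 hA).resolve_left (ne_of_gt (hm₁pos x))
    exact strict_convex_grad_eq hHd hHconv (by linarith)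
  have hueq : ∀ x ∈ cube d, u₁ x = u₂ x := by
    intro x hx
    have h1 := heq1₁ x; have h2 := heq1₂ x
    rw [F1] at h1 h2
    rw [hDueq x hx] at h1
    rw [hmeq x hx] at h1
    linarith
  -- extend to all of ℝ^d by periodicity
  have hshift : ∀ x : Ed d, ∃ mm : Fin d → ℤ,
      (x + fun i => ((mm i : ℝ))) ∈ cube d := by
    intro x
    refine ⟨fun i => -⌊x i⌋, fun i _ => ?_⟩
    have : x i + ((-⌊x i⌋ : ℤ) : ℝ) = Int.fract (x i) := by
      rw [Int.fract]; push_cast; ring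
    constructor
    · rw [Pi.add_apply, this]; exact Int.fract_nonneg _
    · rw [Pi.add_apply, this]; exact (Int.fract_lt_one _).le
  constructor
  · funext x
    obtain ⟨mm, hmem⟩ := hshift x
    rw [← hm₁per x mm, ← hm₂per x mm]
    exact hmeq _ hmem
  · funext x
    obtain ⟨mm, hmem⟩ := hshift x
    rw [← hu₁per x mm, ← hu₂per x mm]
    exact hueq _ hmem
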